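/- Let N ≥ 3 be a prime and let M_k(N) be the N^k × N^k matrices over ZMod N defined recursively by: M_1(N) has entries m_{ij} = i + Σ_{l=1}^{j-i} (N − l + 1) (mod N) for i ≤ j and is symmetric; and the entry of M_{k+1}(N) at position (iN^k + p, jN^k + q) equals M_k(N)_{pq} + M_1(N)_{ij} (mod N) for 0 ≤ i, j ≤ N−1 and 0 ≤ p, q ≤ N^k − 1. Then for every k ≥ 1 and any two distinct rows r_i, r_j of M_k(N), the Hamming distance satisfies d_H(r_i, r_j) = (N − 1)N^{k−1}. -/

import Mathlib

/-- The `N × N` matrix `M_1(N)` over `ZMod N` with entries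
`m_{ij} = i + Σ_{l=1}^{j-i} (N - l + 1) (mod N)` for `i ≤ j`, and `m_{ij} = m_{ji}` for `i > j`. -/
def M1 (N : ℕ) (i j : ℕ) : ZMod N :=
  if i ≤ j then ((i + ∑ l ∈ Finset.Icc 1 (j - i), (N - l + 1) : ℕ) : ZMod N)
  else ((j + ∑ l ∈ Finset.Icc 1 (i - j), (N - l + 1) : ℕ) : ZMod N)

/-- The recursively defined `N^k × N^k` matrices `M_k(N)`: the entry of `M_{k+1}(N)` at
position `(i·N^k + p, j·N^k + q)` is `M_k(N)_{pq} + M_1(N)_{ij}`; the base case `k = 0` is the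
`1 × 1` zero matrix, so that `M_1(N)` is recovered at `k = 1`. -/
def Mk (N : ℕ) : ℕ → ℕ → ℕ → ZMod N
  | 0, _, _ => 0
  | k + 1, a, b => Mk N k (a % N ^ k) (b % N ^ k) + M1 N (a / N ^ k) (b / N ^ k)

section aux
variable {N : ℕ}

lemma sum_Icc_one_id_mul_two (d : ℕ) : (∑ l ∈ Finset.Icc 1 d, l) * 2 = d * (d + 1) := by
  have h : ∑ l ∈ Finset.range (d + 1), l = ∑ l ∈ Finset.Icc 1 d, l := by
    rw [Finset.range_eq_Ico, Finset.sum_eq_sum_Ico_succ_bot (Nat.succ_pos d)]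
    simp [Finset.Ico_add_one_right_eq_Icc]
  rw [← h, Finset.sum_range_id_mul_two]
  simp [Nat.mul_comm]

lemma key_sum {d : ℕ} (hd : d < N) :
    (2 : ZMod N) * ∑ l ∈ Finset.Icc 1 d, ((N - l + 1 : ℕ) : ZMod N)
      = 2 * (d : ZMod N) - d * (d + 1) := by
  have h1 : ∀ l ∈ Finset.Icc 1 d, ((N - l + 1 : ℕ) : ZMod N) = 1 - l := by
    intro l hl
    simp only [Finset.mem_Icc] at hl
    have hlN : N - l + 1 = (N + 1) - l := by omega
    rw [hlN, Nat.cast_sub (by omega)]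
    push_cast
    rw [ZMod.natCast_self]
    ring
  rw [Finset.sum_congr rfl h1, Finset.sum_sub_distrib]
  have hcard : ∑ _l ∈ Finset.Icc 1 d, (1 : ZMod N) = (d : ZMod N) := by
    simp [Nat.Icc_eq_range']
  have h2 : (∑ l ∈ Finset.Icc 1 d, (l : ZMod N)) * 2
      = (d : ZMod N) * ((d : ZMod N) + 1) := by
    have := congrArg (fun n : ℕ => (n : ZMod N)) (sum_Icc_one_id_mul_two d)
    push_cast at this
    exact this
  rw [hcard]
  linear_combination -h2

lemma two_mul_M1_aux {i j : ℕ} (hij : i ≤ j) (hj : j < N) :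
    (2 : ZMod N) * ((i + ∑ l ∈ Finset.Icc 1 (j - i), (N - l + 1) : ℕ) : ZMod N)
      = (i : ZMod N) + j - ((i : ZMod N) - j) ^ 2 := by
  rw [Nat.cast_add, Nat.cast_sum, mul_add, key_sum (by omega)]
  rw [Nat.cast_sub hij]
  ring

lemma two_mul_M1 {i j : ℕ} (hi : i < N) (hj : j < N) :
    (2 : ZMod N) * M1 N i j = (i : ZMod N) + j - ((i : ZMod N) - j) ^ 2 := by
  unfold M1
  split_ifs with h
  · exact two_mul_M1_aux h hj
  · rw [two_mul_M1_aux (le_of_not_ge h) hi]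
    ring

lemma myTwo_ne_zero (hN : 3 ≤ N) : (2 : ZMod N) ≠ 0 := by
  haveI : NeZero N := ⟨by omega⟩
  have : ((2 : ℕ) : ZMod N) ≠ 0 := by
    rw [Ne, ZMod.natCast_eq_zero_iff]
    intro h
    have := Nat.le_of_dvd (by norm_num) h
    omega
  simpa using this

lemma cast_sub_ne_zero (hN : 3 ≤ N) {i j : ℕ} (hi : i < N) (hj : j < N) (hij : i ≠ j) :
    ((i : ZMod N) - j) ≠ 0 := by
  haveI : NeZero N := ⟨by omega⟩
  intro h
  rw [sub_eq_zero] at h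
  have := congrArg ZMod.val h
  rw [ZMod.val_cast_of_lt hi, ZMod.val_cast_of_lt hj] at this
  exact hij this

/-- Row difference of `M1` is affine in the column. -/
lemma M1_row_sub (hN : 3 ≤ N) (hNp : N.Prime) {i j t : ℕ} (hi : i < N) (hj : j < N) (ht : t < N) :
    M1 N i t - M1 N j t
      = ((i : ZMod N) - j) * ((t : ZMod N) + (1 - (i : ZMod N) - j) * (2 : ZMod N)⁻¹) := by
  haveI : Fact N.Prime := ⟨hNp⟩
  have h2 : (2 : ZMod N) ≠ 0 := myTwo_ne_zero hN
  apply mul_left_cancel₀ h2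
  have hinv : (2 : ZMod N) * (2 : ZMod N)⁻¹ = 1 := mul_inv_cancel₀ h2
  rw [mul_sub, two_mul_M1 hi ht, two_mul_M1 hj ht]
  have : (2 : ZMod N) * (((i : ZMod N) - j) * ((t : ZMod N) + (1 - (i : ZMod N) - j) * (2 : ZMod N)⁻¹))
      = ((i : ZMod N) - j) * (2 * (t : ZMod N) + (1 - (i : ZMod N) - j) * ((2:ZMod N) * (2 : ZMod N)⁻¹)) := by
    ring
  rw [this, hinv]
  ring

lemma count_cast (hN : 3 ≤ N) (w : ZMod N) :
    ((Finset.range N).filter fun i : ℕ => (i : ZMod N) = w).card = 1 := by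
  haveI : NeZero N := ⟨by omega⟩
  have : ((Finset.range N).filter fun i : ℕ => (i : ZMod N) = w) = {w.val} := by
    ext x
    simp only [Finset.mem_filter, Finset.mem_range, Finset.mem_singleton]
    constructor
    · rintro ⟨hx, hxw⟩
      rw [← hxw, ZMod.val_cast_of_lt hx]
    · rintro rfl
      exact ⟨ZMod.val_lt w, ZMod.natCast_rightInverse w⟩
  rw [this, Finset.card_singleton]

lemma sum_range_mul_eq {M : ℕ} (n : ℕ) (f : ℕ → ℕ) :
    ∑ t ∈ Finset.range (n * M), f t
      = ∑ i ∈ Finset.range n, ∑ r ∈ Finset.range M, f (i * M + r) := by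
  induction n with
  | zero => simp
  | succ n ih =>
    rw [Nat.succ_mul, Finset.sum_range_add, ih, Finset.sum_range_succ]

lemma Mk_eq_count (hN : 3 ≤ N) (hNp : N.Prime) :
    ∀ k, ∀ a b : ℕ, a < N ^ k → b < N ^ k → a ≠ b →
      ((Finset.range (N ^ k)).filter fun t => Mk N k a t = Mk N k b t).card = N ^ (k - 1) := by
  haveI : Fact N.Prime := ⟨hNp⟩
  intro k
  induction k with
  | zero => intro a b ha hb hab; simp only [pow_zero, Nat.lt_one_iff] at ha hb; omega
  | succ k ih =>
    intro a b ha hb hab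
    set M := N ^ k with hM
    have hMpos : 0 < M := pow_pos (by omega) k
    have hNM : N ^ (k + 1) = N * M := by rw [hM, pow_succ]; ring
    have had : a / M < N := by
      rw [Nat.div_lt_iff_lt_mul hMpos]; omega
    have hbd : b / M < N := by
      rw [Nat.div_lt_iff_lt_mul hMpos]; omega
    have har : a % M < M := Nat.mod_lt _ hMpos
    have hbr : b % M < M := Nat.mod_lt _ hMpos
    have hMk : ∀ (c : ℕ) (i r : ℕ), r < M →
        Mk N (k + 1) c (i * M + r) = Mk N k (c % M) r + M1 N (c / M) i := by
      intro c i r hr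
      show Mk N k (c % N ^ k) ((i * M + r) % N ^ k) + M1 N (c / N ^ k) ((i * M + r) / N ^ k) = _
      rw [← hM, show i * M + r = M * i + r by ring, Nat.mul_add_mod, Nat.mod_eq_of_lt hr,
        Nat.mul_add_div hMpos, Nat.div_eq_of_lt hr, Nat.add_zero]
    rw [Finset.card_filter, hNM, sum_range_mul_eq]
    by_cases h : a / M = b / M
    · -- top digits equal
      have hne : a % M ≠ b % M := by
        intro he
        apply hab
        rw [← Nat.div_add_mod a M, ← Nat.div_add_mod b M, h, he]
      have hk1 : 1 ≤ k := by
        rcases Nat.eq_zero_or_pos k with rfl | h1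
        · have hM1 : M = 1 := by simp [hM]
          simp [hM1, Nat.mod_one] at hne
        · exact h1
      have hinner : ∀ i ∈ Finset.range N,
          (∑ r ∈ Finset.range M,
            if Mk N (k+1) a (i * M + r) = Mk N (k+1) b (i * M + r) then 1 else 0) = N ^ (k - 1) := by
        intro i _
        rw [← ih (a % M) (b % M) har hbr hne, Finset.card_filter]
        apply Finset.sum_congr rfl
        intro r hr
        rw [Finset.mem_range] at hr
        rw [hMk a i r hr, hMk b i r hr, h]
        refine if_congr ?_ rfl rfl
        constructor
        · intro he; exact add_right_cancel he
        · intro he; rw [he]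
      rw [Finset.sum_congr rfl hinner, Finset.sum_const, Finset.card_range, smul_eq_mul]
      rw [show k + 1 - 1 = (k - 1) + 1 by omega, pow_succ]
      ring
    · -- top digits differ
      rw [Finset.sum_comm]
      have hu : ((a / M : ℕ) : ZMod N) - ((b / M : ℕ) : ZMod N) ≠ 0 :=
        cast_sub_ne_zero hN had hbd h
      have hinner : ∀ r ∈ Finset.range M,
          (∑ i ∈ Finset.range N,
            if Mk N (k+1) a (i * M + r) = Mk N (k+1) b (i * M + r) then 1 else 0) = 1 := by
        intro r hr
        rw [Finset.mem_range] at hr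
        set c : ZMod N := (1 - ((a / M : ℕ) : ZMod N) - ((b / M : ℕ) : ZMod N)) * (2 : ZMod N)⁻¹ with hc
        set w : ZMod N :=
          (((a / M : ℕ) : ZMod N) - ((b / M : ℕ) : ZMod N))⁻¹ *
            (Mk N k (b % M) r - Mk N k (a % M) r) - c with hw
        have hrw : (∑ i ∈ Finset.range N,
            if Mk N (k+1) a (i * M + r) = Mk N (k+1) b (i * M + r) then 1 else 0)
            = ((Finset.range N).filter fun i : ℕ => (i : ZMod N) = w).card := by
          rw [Finset.card_filter]
          apply Finset.sum_congr rfl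
          intro i hi
          rw [Finset.mem_range] at hi
          rw [hMk a i r hr, hMk b i r hr]
          refine if_congr ?_ rfl rfl
          constructor
          · intro he
            have hd : M1 N (a / M) i - M1 N (b / M) i
                = Mk N k (b % M) r - Mk N k (a % M) r := by
              linear_combination he
            rw [M1_row_sub hN hNp had hbd hi] at hd
            rw [hw, hc]
            field_simp at hd ⊢
            linear_combination hd
          · intro he
            have hd : M1 N (a / M) i - M1 N (b / M) i
                = Mk N k (b % M) r - Mk N k (a % M) r := by
              rw [M1_row_sub hN hNp had hbd hi, he, hw, hc]
              field_simp
              ring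
            linear_combination hd
        rw [hrw, count_cast hN w]
      rw [Finset.sum_congr rfl hinner, Finset.sum_const, Finset.card_range, smul_eq_mul]
      simp [hM]

end aux

theorem Mk_distinct_rows_hammingDist (N : ℕ) (hN : 3 ≤ N) (hNp : N.Prime)
    (k : ℕ) (hk : 1 ≤ k) (i j : Fin (N ^ k)) (hij : i ≠ j) :
    hammingDist (fun t : Fin (N ^ k) => Mk N k i t) (fun t : Fin (N ^ k) => Mk N k j t)
      = (N - 1) * N ^ (k - 1) := by
  have hcount := Mk_eq_count hN hNp k i j i.isLt j.isLt (fun h => hij (Fin.ext h))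
  have hbridge : (Finset.univ.filter fun t : Fin (N ^ k) => Mk N k i t = Mk N k j t).card
      = ((Finset.range (N ^ k)).filter fun t => Mk N k i t = Mk N k j t).card := by
    rw [Finset.card_filter, Finset.card_filter]
    exact Fin.sum_univ_eq_sum_range
      (fun t => if Mk N k (i : ℕ) t = Mk N k (j : ℕ) t then 1 else 0) (N ^ k)
  have hsplit : (Finset.univ.filter fun t : Fin (N ^ k) => Mk N k (i : ℕ) t = Mk N k (j : ℕ) t).card
      + (Finset.univ.filter fun t : Fin (N ^ k) => ¬ Mk N k (i : ℕ) t = Mk N k (j : ℕ) t).card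
      = N ^ k := by
    rw [Finset.card_filter_add_card_filter_not, Finset.card_univ, Fintype.card_fin]
  have hdist : hammingDist (fun t : Fin (N ^ k) => Mk N k i t) (fun t : Fin (N ^ k) => Mk N k j t)
      = (Finset.univ.filter fun t : Fin (N ^ k) => ¬ Mk N k (i : ℕ) t = Mk N k (j : ℕ) t).card := by
    rfl
  rw [hdist]
  rw [hbridge, hcount] at hsplit
  obtain ⟨m, rfl⟩ : ∃ m, k = m + 1 := ⟨k - 1, by omega⟩
  simp only [Nat.add_sub_cancel] at hsplit ⊢
  have : N ^ (m + 1) = N * N ^ m := by rw [pow_succ]; ring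
  have h2 : (N - 1) * N ^ m = N * N ^ m - N ^ m := by
    rw [Nat.sub_mul, one_mul]
  omega
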